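/- If β > β₀, then there exists z₀ ∈ [0,1]^n with z₀ ≠ 0 and F(z₀) = z₀ such that for every x ∈ [0,1]^n with x ≠ 0, the sequence of iterates F^k(x) converges to z₀ as k → ∞ (the endemic state is a global attractor on [0,1]^n \ {0}). -/

import Mathlib

open Filter Finset

/-- The MMCA map `F`. -/
noncomputable def F {n : ℕ} (R : Matrix (Fin n) (Fin n) ℝ) (β μ : ℝ) (x : Fin n → ℝ) :
    Fin n → ℝ :=
  fun i => 1 - (1 - (1 - μ) * x i) * ∏ j, (1 - β * R i j * x j)

/-- Irreducibility of a (nonnegative) square matrix. -/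
def MatIrred {n : ℕ} (R : Matrix (Fin n) (Fin n) ℝ) : Prop :=
  ∀ i j : Fin n, ∃ k : ℕ, 0 < k ∧ (R ^ k) i j ≠ 0

/-- Spectral radius of a real matrix, as the supremum of the absolute values of the
real spectrum (appropriate here since `R` is symmetric). -/
noncomputable def specRad {n : ℕ} (R : Matrix (Fin n) (Fin n) ℝ) : ℝ :=
  sSup {r : ℝ | ∃ z ∈ spectrum ℝ R, |z| = r}

section aux
variable {n : ℕ} {R : Matrix (Fin n) (Fin n) ℝ} {β μ : ℝ}

lemma factor_mem (hR : ∀ i j, R i j ∈ Set.Icc (0:ℝ) 1) (hβ : β ∈ Set.Ioo (0:ℝ) 1)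
    (hμ : μ ∈ Set.Ioo (0:ℝ) 1) {x : Fin n → ℝ} (hx : ∀ i, x i ∈ Set.Icc (0:ℝ) 1) (i j : Fin n) :
    β * R i j * x j ∈ Set.Icc (0:ℝ) 1 ∧ (1 - μ) * x i ∈ Set.Icc (0:ℝ) 1 := by
  obtain ⟨hβ0, hβ1⟩ := hβ
  obtain ⟨hμ0, hμ1⟩ := hμ
  obtain ⟨hr0, hr1⟩ := hR i j
  obtain ⟨hx0, hx1⟩ := hx j
  obtain ⟨hx0', hx1'⟩ := hx i
  refine ⟨⟨by positivity, ?_⟩, ⟨?_, ?_⟩⟩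
  · have h1 : R i j * x j ≤ 1 := mul_le_one₀ hr1 hx0 hx1
    have h2 : 0 ≤ R i j * x j := mul_nonneg hr0 hx0
    nlinarith
  · nlinarith
  · nlinarith

lemma F_mem_box (hR : ∀ i j, R i j ∈ Set.Icc (0:ℝ) 1) (hβ : β ∈ Set.Ioo (0:ℝ) 1)
    (hμ : μ ∈ Set.Ioo (0:ℝ) 1) {x : Fin n → ℝ} (hx : ∀ i, x i ∈ Set.Icc (0:ℝ) 1) (i : Fin n) :
    F R β μ x i ∈ Set.Icc (0:ℝ) 1 := by
  have hprod0 : 0 ≤ ∏ j, (1 - β * R i j * x j) :=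
    Finset.prod_nonneg fun j _ => by linarith [(factor_mem hR hβ hμ hx i j).1.2]
  have hprod1 : ∏ j, (1 - β * R i j * x j) ≤ 1 :=
    Finset.prod_le_one (fun j _ => by linarith [(factor_mem hR hβ hμ hx i j).1.2])
      (fun j _ => by linarith [(factor_mem hR hβ hμ hx i j).1.1])
  have h1 : (0:ℝ) ≤ 1 - (1 - μ) * x i := by linarith [(factor_mem hR hβ hμ hx i i).2.2]
  have h2 : 1 - (1 - μ) * x i ≤ 1 := by linarith [(factor_mem hR hβ hμ hx i i).2.1]
  constructor
  · simp only [F]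
    nlinarith
  · simp only [F]
    nlinarith

lemma F_mono (hR : ∀ i j, R i j ∈ Set.Icc (0:ℝ) 1) (hβ : β ∈ Set.Ioo (0:ℝ) 1)
    (hμ : μ ∈ Set.Ioo (0:ℝ) 1) {x y : Fin n → ℝ} (hx : ∀ i, x i ∈ Set.Icc (0:ℝ) 1)
    (hy : ∀ i, y i ∈ Set.Icc (0:ℝ) 1) (hxy : x ≤ y) : F R β μ x ≤ F R β μ y := by
  intro i
  simp only [F]
  have h1 : ∏ j, (1 - β * R i j * y j) ≤ ∏ j, (1 - β * R i j * x j) := by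
    apply Finset.prod_le_prod
    · intro j _; linarith [(factor_mem hR hβ hμ hy i j).1.2]
    · intro j _
      have h0 := (hR i j).1
      have hb := hβ.1.le
      nlinarith [mul_le_mul_of_nonneg_left (hxy j) (mul_nonneg hb h0)]
  have h2 : 1 - (1 - μ) * y i ≤ 1 - (1 - μ) * x i := by
    have : (0:ℝ) ≤ 1 - μ := by linarith [hμ.2]
    nlinarith [hxy i]
  have h3 : (0:ℝ) ≤ 1 - (1 - μ) * y i := by linarith [(factor_mem hR hβ hμ hy i i).2.2]
  have h4 : (0:ℝ) ≤ ∏ j, (1 - β * R i j * x j) :=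
    Finset.prod_nonneg fun j _ => by linarith [(factor_mem hR hβ hμ hx i j).1.2]
  nlinarith [mul_le_mul_of_nonneg_left h1 h3, mul_le_mul_of_nonneg_right h2 h4]

lemma F_cont : Continuous (F R β μ) := by
  apply continuous_pi
  intro i
  apply Continuous.sub continuous_const
  apply Continuous.mul
  · exact Continuous.sub continuous_const (continuous_const.mul (continuous_apply i))
  · exact continuous_finset_prod _ fun j _ =>
      Continuous.sub continuous_const (continuous_const.mul (continuous_apply j))

end aux

section iter
variable {n : ℕ} {R : Matrix (Fin n) (Fin n) ℝ} {β μ : ℝ}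

lemma iter_box (hR : ∀ i j, R i j ∈ Set.Icc (0:ℝ) 1) (hβ : β ∈ Set.Ioo (0:ℝ) 1)
    (hμ : μ ∈ Set.Ioo (0:ℝ) 1) {x : Fin n → ℝ} (hx : ∀ i, x i ∈ Set.Icc (0:ℝ) 1) (k : ℕ) :
    ∀ i, (F R β μ)^[k] x i ∈ Set.Icc (0:ℝ) 1 := by
  induction k with
  | zero => simpa using hx
  | succ k ih => rw [Function.iterate_succ_apply']; exact F_mem_box hR hβ hμ ih

lemma iter_mono (hR : ∀ i j, R i j ∈ Set.Icc (0:ℝ) 1) (hβ : β ∈ Set.Ioo (0:ℝ) 1)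
    (hμ : μ ∈ Set.Ioo (0:ℝ) 1) {x y : Fin n → ℝ} (hx : ∀ i, x i ∈ Set.Icc (0:ℝ) 1)
    (hy : ∀ i, y i ∈ Set.Icc (0:ℝ) 1) (hxy : x ≤ y) (k : ℕ) :
    (F R β μ)^[k] x ≤ (F R β μ)^[k] y := by
  induction k with
  | zero => simpa using hxy
  | succ k ih =>
      rw [Function.iterate_succ_apply', Function.iterate_succ_apply']
      exact F_mono hR hβ hμ (iter_box hR hβ hμ hx k) (iter_box hR hβ hμ hy k) ih

lemma fix_of_dec (hR : ∀ i j, R i j ∈ Set.Icc (0:ℝ) 1) (hβ : β ∈ Set.Ioo (0:ℝ) 1)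
    (hμ : μ ∈ Set.Ioo (0:ℝ) 1) {x : Fin n → ℝ} (hx : ∀ i, x i ∈ Set.Icc (0:ℝ) 1)
    (hdec : F R β μ x ≤ x) :
    ∃ z : Fin n → ℝ, (∀ i, z i ∈ Set.Icc (0:ℝ) 1) ∧ F R β μ z = z ∧
      Tendsto (fun k => (F R β μ)^[k] x) atTop (nhds z) ∧ ∀ k, z ≤ (F R β μ)^[k] x := by
  have hstep : ∀ k : ℕ, (F R β μ)^[k+1] x ≤ (F R β μ)^[k] x := by
    intro k
    induction k with
    | zero => simpa using hdec
    | succ k ih =>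
        rw [Function.iterate_succ_apply' (F R β μ) (k+1), Function.iterate_succ_apply' (F R β μ) k]
        rw [Function.iterate_succ_apply'] at ih
        exact F_mono hR hβ hμ (F_mem_box hR hβ hμ (iter_box hR hβ hμ hx k)) (iter_box hR hβ hμ hx k) ih
  have hanti : ∀ i, Antitone fun k => (F R β μ)^[k] x i :=
    fun i => antitone_nat_of_succ_le fun k => hstep k i
  set z : Fin n → ℝ := fun i => ⨅ k, (F R β μ)^[k] x i with hzdef
  have hbdd : ∀ i, BddBelow (Set.range fun k => (F R β μ)^[k] x i) := by
    intro i
    refine ⟨0, ?_⟩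
    rintro a ⟨k, rfl⟩
    exact (iter_box hR hβ hμ hx k i).1
  have htend : Tendsto (fun k => (F R β μ)^[k] x) atTop (nhds z) := by
    rw [tendsto_pi_nhds]
    intro i
    exact tendsto_atTop_ciInf (hanti i) (hbdd i)
  have hzbox : ∀ i, z i ∈ Set.Icc (0:ℝ) 1 := by
    intro i
    constructor
    · exact le_ciInf fun k => (iter_box hR hβ hμ hx k i).1
    · exact le_trans (ciInf_le (hbdd i) 0) (by simpa using (hx i).2)
  have hle : ∀ k, z ≤ (F R β μ)^[k] x := fun k i => ciInf_le (hbdd i) k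
  have hfix : F R β μ z = z := by
    have h1 : Tendsto (fun k => (F R β μ)^[k+1] x) atTop (nhds z) :=
      (tendsto_add_atTop_iff_nat 1).mpr htend
    have h2 : Tendsto (fun k => (F R β μ)^[k+1] x) atTop (nhds (F R β μ z)) := by
      simp only [Function.iterate_succ_apply']
      exact ((F_cont (R := R) (β := β) (μ := μ)).tendsto z).comp htend
    exact tendsto_nhds_unique h2 h1
  exact ⟨z, hzbox, hfix, htend, hle⟩

lemma fix_of_inc (hR : ∀ i j, R i j ∈ Set.Icc (0:ℝ) 1) (hβ : β ∈ Set.Ioo (0:ℝ) 1)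
    (hμ : μ ∈ Set.Ioo (0:ℝ) 1) {x : Fin n → ℝ} (hx : ∀ i, x i ∈ Set.Icc (0:ℝ) 1)
    (hinc : x ≤ F R β μ x) :
    ∃ z : Fin n → ℝ, (∀ i, z i ∈ Set.Icc (0:ℝ) 1) ∧ F R β μ z = z ∧
      Tendsto (fun k => (F R β μ)^[k] x) atTop (nhds z) ∧ ∀ k, (F R β μ)^[k] x ≤ z := by
  have hstep : ∀ k : ℕ, (F R β μ)^[k] x ≤ (F R β μ)^[k+1] x := by
    intro k
    induction k with
    | zero => simpa using hinc
    | succ k ih =>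
        rw [Function.iterate_succ_apply' (F R β μ) (k+1), Function.iterate_succ_apply' (F R β μ) k]
        rw [Function.iterate_succ_apply'] at ih
        exact F_mono hR hβ hμ (iter_box hR hβ hμ hx k) (F_mem_box hR hβ hμ (iter_box hR hβ hμ hx k)) ih
  have hmono : ∀ i, Monotone fun k => (F R β μ)^[k] x i :=
    fun i => monotone_nat_of_le_succ fun k => hstep k i
  set z : Fin n → ℝ := fun i => ⨆ k, (F R β μ)^[k] x i with hzdef
  have hbdd : ∀ i, BddAbove (Set.range fun k => (F R β μ)^[k] x i) := by
    intro i
    refine ⟨1, ?_⟩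
    rintro a ⟨k, rfl⟩
    exact (iter_box hR hβ hμ hx k i).2
  have htend : Tendsto (fun k => (F R β μ)^[k] x) atTop (nhds z) := by
    rw [tendsto_pi_nhds]
    intro i
    exact tendsto_atTop_ciSup (hmono i) (hbdd i)
  have hzbox : ∀ i, z i ∈ Set.Icc (0:ℝ) 1 := by
    intro i
    constructor
    · exact le_trans (hx i).1 (by simpa using le_ciSup (hbdd i) 0)
    · exact ciSup_le fun k => (iter_box hR hβ hμ hx k i).2
  have hle : ∀ k, (F R β μ)^[k] x ≤ z := fun k i => le_ciSup (hbdd i) k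
  have hfix : F R β μ z = z := by
    have h1 : Tendsto (fun k => (F R β μ)^[k+1] x) atTop (nhds z) :=
      (tendsto_add_atTop_iff_nat 1).mpr htend
    have h2 : Tendsto (fun k => (F R β μ)^[k+1] x) atTop (nhds (F R β μ z)) := by
      simp only [Function.iterate_succ_apply']
      exact ((F_cont (R := R) (β := β) (μ := μ)).tendsto z).comp htend
    exact tendsto_nhds_unique h2 h1
  exact ⟨z, hzbox, hfix, htend, hle⟩

end iter

section prodlem
variable {ι : Type*}

lemma prod_one_sub_nonneg (s : Finset ι) (f : ι → ℝ) (h1 : ∀ j ∈ s, f j ≤ 1) :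
    0 ≤ ∏ j ∈ s, (1 - f j) :=
  Finset.prod_nonneg fun j hj => by linarith [h1 j hj]

lemma prod_one_sub_le_one (s : Finset ι) (f : ι → ℝ) (h0 : ∀ j ∈ s, 0 ≤ f j)
    (h1 : ∀ j ∈ s, f j ≤ 1) : ∏ j ∈ s, (1 - f j) ≤ 1 :=
  Finset.prod_le_one (fun j hj => by linarith [h1 j hj]) (fun j hj => by linarith [h0 j hj])

lemma prod_one_sub_le_quad (s : Finset ι) (f : ι → ℝ) (h0 : ∀ j ∈ s, 0 ≤ f j)
    (h1 : ∀ j ∈ s, f j ≤ 1) :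
    ∏ j ∈ s, (1 - f j) ≤ 1 - (∑ j ∈ s, f j) + (∑ j ∈ s, f j)^2 := by
  induction s using Finset.cons_induction with
  | empty => simp
  | cons a s ha ih =>
      rw [Finset.prod_cons, Finset.sum_cons]
      have hu0 : 0 ≤ f a := h0 a (Finset.mem_cons_self a s)
      have hu1 : f a ≤ 1 := h1 a (Finset.mem_cons_self a s)
      have h0' : ∀ j ∈ s, 0 ≤ f j := fun j hj => h0 j (Finset.mem_cons_of_mem hj)
      have h1' : ∀ j ∈ s, f j ≤ 1 := fun j hj => h1 j (Finset.mem_cons_of_mem hj)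
      have ihs := ih h0' h1'
      have hs0 : 0 ≤ ∑ j ∈ s, f j := Finset.sum_nonneg h0'
      have key : (1 - f a) * ∏ j ∈ s, (1 - f j)
          ≤ (1 - f a) * (1 - (∑ j ∈ s, f j) + (∑ j ∈ s, f j)^2) :=
        mul_le_mul_of_nonneg_left ihs (by linarith)
      nlinarith [key]

lemma one_sub_prod_superhom (s : Finset ι) (f : ι → ℝ) {t : ℝ} (h0 : ∀ j ∈ s, 0 ≤ f j)
    (h1 : ∀ j ∈ s, f j ≤ 1) (ht0 : 0 ≤ t) (ht1 : t ≤ 1) :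
    t * (1 - ∏ j ∈ s, (1 - f j)) ≤ 1 - ∏ j ∈ s, (1 - t * f j) := by
  induction s using Finset.cons_induction with
  | empty => simp
  | cons a s ha ih =>
      rw [Finset.prod_cons, Finset.prod_cons]
      have hu0 : 0 ≤ f a := h0 a (Finset.mem_cons_self a s)
      have hu1 : f a ≤ 1 := h1 a (Finset.mem_cons_self a s)
      have h0' : ∀ j ∈ s, 0 ≤ f j := fun j hj => h0 j (Finset.mem_cons_of_mem hj)
      have h1' : ∀ j ∈ s, f j ≤ 1 := fun j hj => h1 j (Finset.mem_cons_of_mem hj)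
      have ihs := ih h0' h1'
      have hP0 : 0 ≤ ∏ j ∈ s, (1 - f j) := prod_one_sub_nonneg s f h1'
      have hP1 : ∏ j ∈ s, (1 - f j) ≤ 1 := prod_one_sub_le_one s f h0' h1'
      have hQ0 : 0 ≤ ∏ j ∈ s, (1 - t * f j) := by
        apply Finset.prod_nonneg
        intro j hj
        nlinarith [h0' j hj, h1' j hj]
      have htu : t * f a ≤ 1 := by nlinarith
      nlinarith [mul_le_mul_of_nonneg_left ihs (by nlinarith : (0:ℝ) ≤ 1 - t * f a),
        mul_nonneg (mul_nonneg ht0 hu0) (sub_nonneg.2 hP1),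
        mul_nonneg (mul_nonneg (mul_nonneg ht0 ht0) hu0) (sub_nonneg.2 hP1)]

end prodlem

section lower
variable {n : ℕ} {R : Matrix (Fin n) (Fin n) ℝ} {β μ : ℝ}

lemma F_lower (hR : ∀ i j, R i j ∈ Set.Icc (0:ℝ) 1) (hβ : β ∈ Set.Ioo (0:ℝ) 1)
    (hμ : μ ∈ Set.Ioo (0:ℝ) 1) {x : Fin n → ℝ} (hx : ∀ i, x i ∈ Set.Icc (0:ℝ) 1) (i : Fin n) :
    ((1-μ) * x i + β * ∑ j, R i j * x j) - ((1-μ) * x i + β * ∑ j, R i j * x j)^2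
      ≤ F R β μ x i := by
  set a := (1-μ) * x i with ha
  set s := β * ∑ j, R i j * x j with hs
  have hf0 : ∀ j ∈ Finset.univ, 0 ≤ β * R i j * x j :=
    fun j _ => (factor_mem hR hβ hμ hx i j).1.1
  have hf1 : ∀ j ∈ Finset.univ, β * R i j * x j ≤ 1 :=
    fun j _ => (factor_mem hR hβ hμ hx i j).1.2
  have hsum : ∑ j, β * R i j * x j = s := by
    rw [hs, Finset.mul_sum]
    exact Finset.sum_congr rfl fun j _ => by ring
  have hquad := prod_one_sub_le_quad Finset.univ (fun j => β * R i j * x j) hf0 hf1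
  rw [hsum] at hquad
  have ha0 : 0 ≤ a := (factor_mem hR hβ hμ hx i i).2.1
  have ha1 : a ≤ 1 := (factor_mem hR hβ hμ hx i i).2.2
  have hs0 : 0 ≤ s := hsum ▸ Finset.sum_nonneg hf0
  have key : (1 - a) * ∏ j, (1 - β * R i j * x j) ≤ 1 - (a + s) + (a + s)^2 := by
    have h1 : (1 - a) * ∏ j, (1 - β * R i j * x j) ≤ (1 - a) * (1 - s + s^2) :=
      mul_le_mul_of_nonneg_left hquad (by linarith)
    nlinarith
  simp only [F]
  nlinarith [key]

lemma F_subsolution (hR : ∀ i j, R i j ∈ Set.Icc (0:ℝ) 1) (hβ : β ∈ Set.Ioo (0:ℝ) 1)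
    (hμ : μ ∈ Set.Ioo (0:ℝ) 1) {v : Fin n → ℝ} {lam : ℝ} (hv : ∀ i, 0 < v i)
    (hev : R.mulVec v = lam • v) {ε : ℝ} (hε0 : 0 < ε)
    (hεsmall : ∀ i, (1 - μ + β * lam)^2 * (ε * v i) ≤ (1 - μ + β * lam) - 1)
    (hbox : ∀ i, ε * v i ≤ 1) :
    ε • v ≤ F R β μ (ε • v) := by
  intro i
  set σ := 1 - μ + β * lam with hσ
  have hxbox : ∀ j, (ε • v) j ∈ Set.Icc (0:ℝ) 1 := by
    intro j
    simp only [Pi.smul_apply, smul_eq_mul]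
    exact ⟨le_of_lt (mul_pos hε0 (hv j)), hbox j⟩
  have hmv : ∑ j, R i j * (ε * v j) = ε * (lam * v i) := by
    have := congrFun hev i
    simp only [Matrix.mulVec, dotProduct, Pi.smul_apply, smul_eq_mul] at this
    calc ∑ j, R i j * (ε * v j) = ε * ∑ j, R i j * v j := by
          rw [Finset.mul_sum]; exact Finset.sum_congr rfl fun j _ => by ring
      _ = ε * (lam * v i) := by rw [this]
  have hlow := F_lower hR hβ hμ hxbox i
  simp only [Pi.smul_apply, smul_eq_mul] at hlow ⊢
  rw [hmv] at hlow
  have hS : (1-μ) * (ε * v i) + β * (ε * (lam * v i)) = σ * (ε * v i) := by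
    rw [hσ]; ring
  rw [hS] at hlow
  have hsmall := hεsmall i
  have hvi := hv i
  nlinarith [hlow, mul_pos hε0 hvi]

end lower

section uniq
variable {n : ℕ} {R : Matrix (Fin n) (Fin n) ℝ} {β μ : ℝ}

lemma F_strict_superhom (hR : ∀ i j, R i j ∈ Set.Icc (0:ℝ) 1) (hβ : β ∈ Set.Ioo (0:ℝ) 1)
    (hμ : μ ∈ Set.Ioo (0:ℝ) 1) (hrow : ∀ i, ∃ j, 0 < R i j) {z : Fin n → ℝ}
    (hz : ∀ i, z i ∈ Set.Icc (0:ℝ) 1) (hzpos : ∀ i, 0 < z i) {t : ℝ} (ht0 : 0 < t)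
    (ht1 : t < 1) (i : Fin n) : t * F R β μ z i < F R β μ (t • z) i := by
  set f : Fin n → ℝ := fun j => β * R i j * z j with hf
  have hf0 : ∀ j ∈ Finset.univ, 0 ≤ f j := fun j _ => (factor_mem hR hβ hμ hz i j).1.1
  have hf1 : ∀ j ∈ Finset.univ, f j ≤ 1 := fun j _ => (factor_mem hR hβ hμ hz i j).1.2
  have hfβ : ∀ j, f j ≤ β := by
    intro j
    have h1 : R i j * z j ≤ 1 := mul_le_one₀ (hR i j).2 (hz j).1 (hz j).2
    have h2 : 0 ≤ R i j * z j := mul_nonneg (hR i j).1 (hz j).1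
    calc f j = β * (R i j * z j) := by rw [hf]; ring
      _ ≤ β * 1 := mul_le_mul_of_nonneg_left h1 hβ.1.le
      _ = β := mul_one β
  -- rewrite F (t • z) i
  have hrw : F R β μ (t • z) i
      = 1 - (1 - t * ((1-μ) * z i)) * ∏ j, (1 - t * f j) := by
    simp only [F, Pi.smul_apply, smul_eq_mul]
    congr 1
    congr 1
    · ring_nf
    · exact Finset.prod_congr rfl fun j _ => by rw [hf]; ring_nf
  set A := (1-μ) * z i with hA
  have hA0 : 0 < A := by
    have := (hμ.2)
    have := hzpos i
    rw [hA]; nlinarith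
  set P1 := ∏ j, (1 - f j) with hP1
  set Pt := ∏ j, (1 - t * f j) with hPt
  -- strict monotonicity of the product
  have hPts : P1 < Pt := by
    obtain ⟨j₀, hj₀⟩ := hrow i
    have hfpos : 0 < f j₀ := mul_pos (mul_pos hβ.1 hj₀) (hzpos _)
    have hβ1 : (0:ℝ) < 1 - β := by linarith [hβ.2]
    set Q1 := ∏ j ∈ Finset.univ.erase j₀, (1 - f j) with hQ1
    set Qt := ∏ j ∈ Finset.univ.erase j₀, (1 - t * f j) with hQt
    have hQle : Q1 ≤ Qt := by
      apply Finset.prod_le_prod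
      · intro j _; linarith [hfβ j]
      · intro j _; nlinarith [hf0 j (Finset.mem_univ j)]
    have hQtpos : 0 < Qt := by
      apply Finset.prod_pos
      intro j _
      nlinarith [hf0 j (Finset.mem_univ j), hfβ j]
    rw [hP1, hPt, ← Finset.mul_prod_erase _ _ (Finset.mem_univ j₀),
      ← Finset.mul_prod_erase _ _ (Finset.mem_univ j₀), ← hQ1, ← hQt]
    have h1 : (1 - f j₀) < (1 - t * f j₀) := by nlinarith
    have step1 : (1 - f j₀) * Q1 ≤ (1 - f j₀) * Qt :=
      mul_le_mul_of_nonneg_left hQle (by linarith [hfβ j₀])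
    have step2 : (1 - f j₀) * Qt < (1 - t * f j₀) * Qt := mul_lt_mul_of_pos_right h1 hQtpos
    linarith
  have hsup := one_sub_prod_superhom Finset.univ f hf0 hf1 ht0.le ht1.le
  rw [← hP1, ← hPt] at hsup
  have hPt1 : Pt ≤ 1 := by
    apply prod_one_sub_le_one
    · intro j hj; exact mul_nonneg ht0.le (hf0 j hj)
    · intro j hj
      have := hf1 j hj
      have := hf0 j hj
      nlinarith
  have hFz : F R β μ z i = 1 - (1 - A) * P1 := by
    simp only [F, hA, hP1, hf]
  rw [hrw, hFz]
  nlinarith [mul_lt_mul_of_pos_left hPts (mul_pos ht0 hA0)]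

lemma fixed_le (hR : ∀ i j, R i j ∈ Set.Icc (0:ℝ) 1) (hβ : β ∈ Set.Ioo (0:ℝ) 1)
    (hμ : μ ∈ Set.Ioo (0:ℝ) 1) (hrow : ∀ i, ∃ j, 0 < R i j) (hn : 0 < n)
    {w z : Fin n → ℝ} (hw : ∀ i, w i ∈ Set.Icc (0:ℝ) 1) (hz : ∀ i, z i ∈ Set.Icc (0:ℝ) 1)
    (hwpos : ∀ i, 0 < w i) (hzpos : ∀ i, 0 < z i) (hfw : F R β μ w = w)
    (hfz : F R β μ z = z) : z ≤ w := by
  haveI : Nonempty (Fin n) := ⟨⟨0, hn⟩⟩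
  set t := Finset.univ.inf' Finset.univ_nonempty (fun i => w i / z i) with htdef
  obtain ⟨i₀, -, hi₀⟩ := Finset.exists_mem_eq_inf' Finset.univ_nonempty (fun i => w i / z i)
  have ht_le : ∀ i, t ≤ w i / z i := fun i => Finset.inf'_le _ (Finset.mem_univ i)
  have htz : ∀ i, t * z i ≤ w i := by
    intro i
    have := ht_le i
    rw [le_div_iff₀ (hzpos i)] at this
    linarith
  have ht0 : 0 < t := by
    rw [← htdef] at hi₀
    rw [hi₀]
    exact div_pos (hwpos i₀) (hzpos i₀)
  by_cases ht1 : 1 ≤ t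
  · intro i
    have := htz i
    nlinarith [hzpos i, htz i]
  · exfalso
    push_neg at ht1
    have htzbox : ∀ i, (t • z) i ∈ Set.Icc (0:ℝ) 1 := by
      intro i
      simp only [Pi.smul_apply, smul_eq_mul]
      exact ⟨le_of_lt (mul_pos ht0 (hzpos i)), le_trans (htz i) (hw i).2⟩
    have hmono : F R β μ (t • z) ≤ F R β μ w :=
      F_mono hR hβ hμ htzbox hw (fun i => by simpa using htz i)
    have hstrict := F_strict_superhom hR hβ hμ hrow hz hzpos ht0 ht1 i₀
    have heq : t * z i₀ = w i₀ := by
      rw [← htdef] at hi₀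
      rw [hi₀, div_mul_cancel₀ _ (hzpos i₀).ne']
    have : w i₀ < w i₀ := by
      calc w i₀ = t * z i₀ := heq.symm
        _ = t * F R β μ z i₀ := by rw [hfz]
        _ < F R β μ (t • z) i₀ := hstrict
        _ ≤ F R β μ w i₀ := hmono i₀
        _ = w i₀ := by rw [hfw]
    exact lt_irrefl _ this

end uniq

section support
variable {n : ℕ} {R : Matrix (Fin n) (Fin n) ℝ} {β μ : ℝ}

lemma pow_entry_nonneg (hR : ∀ i j, 0 ≤ R i j) (k : ℕ) : ∀ i j, 0 ≤ (R ^ k) i j := by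
  induction k with
  | zero =>
      intro i j
      simp only [pow_zero, Matrix.one_apply]
      split <;> norm_num
  | succ k ih =>
      intro i j
      rw [pow_succ, Matrix.mul_apply]
      exact Finset.sum_nonneg fun m _ => mul_nonneg (ih i m) (hR m j)

lemma row_nonzero (hR : ∀ i j, R i j ∈ Set.Icc (0:ℝ) 1)
    (hirr : ∀ i j : Fin n, ∃ k : ℕ, 0 < k ∧ (R ^ k) i j ≠ 0) (i : Fin n) :
    ∃ j, 0 < R i j := by
  obtain ⟨k, hk0, hk⟩ := hirr i i
  obtain ⟨k', rfl⟩ : ∃ k', k = k' + 1 := ⟨k - 1, (Nat.succ_pred_eq_of_pos hk0).symm⟩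
  rw [pow_succ', Matrix.mul_apply] at hk
  obtain ⟨m, -, hm⟩ := Finset.exists_ne_zero_of_sum_ne_zero hk
  refine ⟨m, ?_⟩
  rcases lt_or_eq_of_le (hR i m).1 with h | h
  · exact h
  · exact absurd (by rw [← h]; ring) hm

/-- positivity is preserved and spreads along edges -/
lemma F_pos_of (hR : ∀ i j, R i j ∈ Set.Icc (0:ℝ) 1) (hβ : β ∈ Set.Ioo (0:ℝ) 1)
    (hμ : μ ∈ Set.Ioo (0:ℝ) 1) {x : Fin n → ℝ} (hx : ∀ i, x i ∈ Set.Icc (0:ℝ) 1) (i : Fin n)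
    (h : 0 < x i ∨ ∃ j, 0 < R i j * x j) : 0 < F R β μ x i := by
  have hfac0 : ∀ j, 0 ≤ 1 - β * R i j * x j := fun j => by
    linarith [(factor_mem hR hβ hμ hx i j).1.2]
  have hfac1 : ∀ j, 1 - β * R i j * x j ≤ 1 := fun j => by
    linarith [(factor_mem hR hβ hμ hx i j).1.1]
  have ha0 : 0 ≤ 1 - (1 - μ) * x i := by linarith [(factor_mem hR hβ hμ hx i i).2.2]
  have ha1 : 1 - (1 - μ) * x i ≤ 1 := by linarith [(factor_mem hR hβ hμ hx i i).2.1]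
  have hprod1 : ∏ j, (1 - β * R i j * x j) ≤ 1 :=
    prod_one_sub_le_one _ _ (fun j _ => (factor_mem hR hβ hμ hx i j).1.1)
      (fun j _ => (factor_mem hR hβ hμ hx i j).1.2)
  have hprod0 : 0 ≤ ∏ j, (1 - β * R i j * x j) :=
    prod_one_sub_nonneg _ _ (fun j _ => (factor_mem hR hβ hμ hx i j).1.2)
  simp only [F]
  rcases h with h | ⟨j, hj⟩
  · -- the first factor is < 1
    have h1 : 1 - (1 - μ) * x i < 1 := by nlinarith [hμ.2]
    nlinarith
  · -- one of the product factors is < 1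
    have hfj : 0 < β * R i j * x j := by
      have := mul_pos hβ.1 hj
      calc (0:ℝ) < β * (R i j * x j) := this
        _ = β * R i j * x j := by ring
    have hprodlt : ∏ m, (1 - β * R i m * x m) ≤ 1 - β * R i j * x j := by
      rw [← Finset.mul_prod_erase _ _ (Finset.mem_univ j)]
      have hrest1 : ∏ m ∈ Finset.univ.erase j, (1 - β * R i m * x m) ≤ 1 :=
        prod_one_sub_le_one _ _ (fun m _ => (factor_mem hR hβ hμ hx i m).1.1)
          (fun m _ => (factor_mem hR hβ hμ hx i m).1.2)
      have hrest0 : 0 ≤ ∏ m ∈ Finset.univ.erase j, (1 - β * R i m * x m) :=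
        prod_one_sub_nonneg _ _ (fun m _ => (factor_mem hR hβ hμ hx i m).1.2)
      nlinarith [hfac0 j]
    nlinarith

lemma iter_pos_of_pow (hR : ∀ i j, R i j ∈ Set.Icc (0:ℝ) 1) (hβ : β ∈ Set.Ioo (0:ℝ) 1)
    (hμ : μ ∈ Set.Ioo (0:ℝ) 1) {x : Fin n → ℝ} (hx : ∀ i, x i ∈ Set.Icc (0:ℝ) 1) :
    ∀ (k : ℕ) (i j : Fin n), (R ^ k) i j ≠ 0 → 0 < x j → 0 < (F R β μ)^[k] x i := by
  intro k
  induction k with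
  | zero =>
      intro i j hij hxj
      simp only [pow_zero, Matrix.one_apply, ne_eq, ite_eq_right_iff] at hij
      have : i = j := by by_contra h; exact hij (fun h' => absurd h' h)
      simpa [this] using hxj
  | succ k ih =>
      intro i j hij hxj
      rw [pow_succ', Matrix.mul_apply] at hij
      obtain ⟨m, -, hm⟩ := Finset.exists_ne_zero_of_sum_ne_zero hij
      have hRim : 0 < R i m := by
        rcases lt_or_eq_of_le (hR i m).1 with h | h
        · exact h
        · exact absurd (by rw [← h]; ring) hm
      have hRk : (R ^ k) m j ≠ 0 := fun h => hm (by rw [h]; ring)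
      have hym : 0 < (F R β μ)^[k] x m := ih m j hRk hxj
      rw [Function.iterate_succ_apply']
      exact F_pos_of hR hβ hμ (iter_box hR hβ hμ hx k) i
        (Or.inr ⟨m, mul_pos hRim hym⟩)

lemma iter_pos_persist (hR : ∀ i j, R i j ∈ Set.Icc (0:ℝ) 1) (hβ : β ∈ Set.Ioo (0:ℝ) 1)
    (hμ : μ ∈ Set.Ioo (0:ℝ) 1) {x : Fin n → ℝ} (hx : ∀ i, x i ∈ Set.Icc (0:ℝ) 1)
    {k : ℕ} {i : Fin n} (h : 0 < (F R β μ)^[k] x i) (l : ℕ) (hl : k ≤ l) :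
    0 < (F R β μ)^[l] x i := by
  induction l with
  | zero =>
      have : k = 0 := Nat.le_zero.mp hl
      simpa [← this] using h
  | succ l ih =>
      rcases Nat.lt_or_ge k (l+1) with h' | h'
      · have hkl : k ≤ l := Nat.lt_succ_iff.mp h'
        rw [Function.iterate_succ_apply']
        exact F_pos_of hR hβ hμ (iter_box hR hβ hμ hx l) i (Or.inl (ih hkl))
      · have : k = l + 1 := le_antisymm hl h'
        simpa [← this] using h

/-- starting from any nonzero point of the box, all coordinates become positive -/
lemma iter_all_pos (hR : ∀ i j, R i j ∈ Set.Icc (0:ℝ) 1) (hβ : β ∈ Set.Ioo (0:ℝ) 1)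
    (hμ : μ ∈ Set.Ioo (0:ℝ) 1) (hirr : ∀ i j : Fin n, ∃ k : ℕ, 0 < k ∧ (R ^ k) i j ≠ 0)
    {x : Fin n → ℝ} (hx : ∀ i, x i ∈ Set.Icc (0:ℝ) 1) (hx0 : x ≠ 0) :
    ∃ K : ℕ, ∀ i, 0 < (F R β μ)^[K] x i := by
  have : ∃ j, x j ≠ 0 := by
    by_contra h
    push_neg at h
    exact hx0 (funext h)
  obtain ⟨j₀, hj₀⟩ := this
  have hj₀pos : 0 < x j₀ := lt_of_le_of_ne (hx j₀).1 (Ne.symm hj₀)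
  classical
  choose g hg0 hgne using fun i => hirr i j₀
  refine ⟨Finset.univ.sup g, fun i => ?_⟩
  have hK : g i ≤ Finset.univ.sup g := Finset.le_sup (Finset.mem_univ i)
  exact iter_pos_persist hR hβ hμ hx
    (iter_pos_of_pow hR hβ hμ hx (g i) i j₀ (hgne i) hj₀pos) _ hK

end support

section spec
variable {n : ℕ} {R : Matrix (Fin n) (Fin n) ℝ}

lemma mem_spectrum_iff_mulVec {c : ℝ} :
    c ∈ spectrum ℝ R ↔ ∃ u : Fin n → ℝ, u ≠ 0 ∧ R.mulVec u = c • u := by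
  rw [← AlgEquiv.spectrum_eq (Matrix.toLinAlgEquiv' : Matrix (Fin n) (Fin n) ℝ ≃ₐ[ℝ] _) R,
    ← Module.End.hasEigenvalue_iff_mem_spectrum]
  constructor
  · intro h
    obtain ⟨u, hu⟩ := h.exists_hasEigenvector
    refine ⟨u, hu.2, ?_⟩
    have := Module.End.mem_eigenspace_iff.mp hu.1
    simpa [Matrix.toLinAlgEquiv'_apply] using this
  · rintro ⟨u, hu0, huv⟩
    apply Module.End.hasEigenvalue_of_hasEigenvector (x := u)
    refine ⟨Module.End.mem_eigenspace_iff.mpr ?_, hu0⟩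
    simpa [Matrix.toLinAlgEquiv'_apply] using huv

lemma q_abs_ge (hR : ∀ i j, (0:ℝ) ≤ R i j) (x : Fin n → ℝ) :
    ∑ i, (∑ j, R i j * x j) * x i ≤ ∑ i, (∑ j, R i j * |x j|) * |x i| := by
  apply Finset.sum_le_sum
  intro i _
  calc (∑ j, R i j * x j) * x i ≤ |(∑ j, R i j * x j) * x i| := le_abs_self _
    _ = |∑ j, R i j * x j| * |x i| := abs_mul _ _
    _ ≤ (∑ j, |R i j * x j|) * |x i| :=
        mul_le_mul_of_nonneg_right (Finset.abs_sum_le_sum_abs _ _) (abs_nonneg _)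
    _ = (∑ j, R i j * |x j|) * |x i| := by
        congr 1
        exact Finset.sum_congr rfl fun j _ => by rw [abs_mul, abs_of_nonneg (hR i j)]

end spec

section perron
variable {n : ℕ}

lemma euclid_norm_sq (x : EuclideanSpace ℝ (Fin n)) : ‖x‖^2 = ∑ i, x i^2 := by
  rw [← real_inner_self_eq_norm_sq]
  rw [real_inner_self_eq_norm_sq, EuclideanSpace.norm_sq_eq]; simp

lemma perron (hn : 2 ≤ n) (R : Matrix (Fin n) (Fin n) ℝ) (hsymm : R.IsSymm)
    (hR : ∀ i j, R i j ∈ Set.Icc (0:ℝ) 1) (hdiag : ∀ i, R i i = 0)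
    (hirr : ∀ i j : Fin n, ∃ k : ℕ, 0 < k ∧ (R ^ k) i j ≠ 0) :
    ∃ (lam : ℝ) (v : Fin n → ℝ), 0 < lam ∧ (∀ i, 0 < v i) ∧ R.mulVec v = lam • v ∧
      specRad R = lam := by
  classical
  have hnpos : 0 < n := by omega
  set E := EuclideanSpace ℝ (Fin n) with hE
  set T : E →L[ℝ] E := Matrix.toEuclideanCLM (𝕜 := ℝ) R with hT
  -- self adjointness
  have hRh : IsSelfAdjoint R := by
    rw [IsSelfAdjoint, Matrix.star_eq_conjTranspose, Matrix.conjTranspose_eq_transpose_of_trivial]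
    exact hsymm
  have hTsa : IsSelfAdjoint T := by
    rw [IsSelfAdjoint, hT, ← map_star (Matrix.toEuclideanCLM (𝕜 := ℝ)) R, hRh]
  -- the quadratic form
  have hTx : ∀ (x : E) (i : Fin n), (T x) i = ∑ j, R i j * x j := by
    intro x i
    have := congrFun (Matrix.ofLp_toEuclideanCLM (𝕜 := ℝ) R x) i
    exact this.trans (by simp [Matrix.mulVec, dotProduct])
  have hq : ∀ x : E, T.reApplyInnerSelf x = ∑ i, (∑ j, R i j * x j) * x i := by
    intro x
    rw [ContinuousLinearMap.reApplyInnerSelf_apply]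
    simp only [PiLp.inner_apply, RCLike.inner_apply, conj_trivial, RCLike.re_to_real]
    exact Finset.sum_congr rfl fun i _ => by rw [hTx, RCLike.inner_apply', conj_trivial]
  -- max of Rayleigh on the sphere
  have hsph_ne : (Metric.sphere (0:E) 1).Nonempty := by
    refine ⟨EuclideanSpace.single ⟨0, hnpos⟩ (1:ℝ), ?_⟩
    rw [mem_sphere_zero_iff_norm, EuclideanSpace.norm_single, norm_one]
  obtain ⟨x₀, hx₀mem, hx₀max⟩ := (isCompact_sphere (0:E) 1).exists_isMaxOn hsph_ne
    T.reApplyInnerSelf_continuous.continuousOn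
  have hx₀norm : ‖x₀‖ = 1 := mem_sphere_zero_iff_norm.mp hx₀mem
  have hx₀ne : x₀ ≠ 0 := by
    intro h; rw [h, norm_zero] at hx₀norm; exact one_ne_zero hx₀norm.symm
  set lam : ℝ := ⨆ x : {x : E // x ≠ 0}, T.rayleighQuotient x with hlam
  have hEV : T x₀ = lam • x₀ := by
    have h := hTsa.hasEigenvector_of_isMaxOn hx₀ne (by rwa [hx₀norm])
    have := Module.End.mem_eigenspace_iff.mp h.1
    simpa using this
  have hlam_val : T.reApplyInnerSelf x₀ = lam := by
    rw [ContinuousLinearMap.reApplyInnerSelf_apply, hEV, inner_smul_left]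
    simp [real_inner_self_eq_norm_sq, hx₀norm]
  -- scaling of the quadratic form
  have hsmul : ∀ (c : ℝ) (x : E), T.reApplyInnerSelf (c • x) = c^2 * T.reApplyInnerSelf x := by
    intro c x
    rw [T.reApplyInnerSelf_smul]
    norm_num [sq_abs]
  -- global bound
  have hbound : ∀ x : E, T.reApplyInnerSelf x ≤ lam * ‖x‖^2 := by
    intro x
    rcases eq_or_ne x 0 with rfl | hx
    · simp [ContinuousLinearMap.reApplyInnerSelf_apply]
    · have hxn : (0:ℝ) < ‖x‖ := norm_pos_iff.mpr hx
      have hmem : ‖x‖⁻¹ • x ∈ Metric.sphere (0:E) 1 := by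
        rw [mem_sphere_zero_iff_norm, norm_smul, norm_inv, norm_norm]
        field_simp
      have h1 := hx₀max hmem
      simp only [Set.mem_setOf_eq, hlam_val] at h1
      rw [hsmul (‖x‖⁻¹) x] at h1
      have h3 : T.reApplyInnerSelf x = ‖x‖^2 * ((‖x‖⁻¹)^2 * T.reApplyInnerSelf x) := by
        field_simp
      rw [h3]
      calc ‖x‖^2 * ((‖x‖⁻¹)^2 * T.reApplyInnerSelf x) ≤ ‖x‖^2 * lam := by
            apply mul_le_mul_of_nonneg_left h1 (by positivity)
        _ = lam * ‖x‖^2 := mul_comm _ _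
  -- lam is positive
  have hlampos : 0 < lam := by
    obtain ⟨j₀, hj₀⟩ := row_nonzero hR hirr ⟨0, hnpos⟩
    set i₀ : Fin n := ⟨0, hnpos⟩ with hi₀
    have hne : i₀ ≠ j₀ := by
      intro h; rw [h] at hj₀; rw [hdiag j₀] at hj₀; exact lt_irrefl _ hj₀
    set y' : Fin n → ℝ := fun i => (if i = i₀ then (1:ℝ) else 0) + (if i = j₀ then (1:ℝ) else 0)
      with hy'
    set y : E := (WithLp.equiv 2 (Fin n → ℝ)).symm y' with hy
    have hyi : ∀ i, y i = y' i := fun i => rfl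
    have hyne : y ≠ 0 := by
      intro h
      have : y i₀ = 0 := by rw [h]; rfl
      rw [hyi, hy'] at this
      simp [hne] at this
    have hrowsum : ∀ i, ∑ j, R i j * y' j = R i i₀ + R i j₀ := by
      intro i
      rw [hy']
      simp [mul_add, Finset.sum_add_distrib, mul_ite, Finset.sum_ite_eq']
    have hqy : T.reApplyInnerSelf y = 2 * R i₀ j₀ := by
      rw [hq]
      have hstep : ∀ i, (∑ j, R i j * y j) * y i = (R i i₀ + R i j₀) * y' i := by
        intro i
        have h1 : (∑ j, R i j * y j) = R i i₀ + R i j₀ := hrowsum i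
        rw [h1, hyi]
      calc ∑ i, (∑ j, R i j * y j) * y i = ∑ i, (R i i₀ + R i j₀) * y' i :=
            Finset.sum_congr rfl fun i _ => hstep i
        _ = 2 * R i₀ j₀ := by
            rw [hy']
            have hsym' : R j₀ i₀ = R i₀ j₀ := by
              have := congrFun (congrFun hsymm i₀) j₀
              simpa [Matrix.transpose_apply] using this
            simp [add_mul, mul_add, mul_ite, Finset.sum_add_distrib, Finset.sum_ite_eq',
              hne, Ne.symm hne, hdiag, hsym']
            ring
      
    have hyn : (0:ℝ) < ‖y‖ := norm_pos_iff.mpr hyne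
    have := hbound y
    rw [hqy] at this
    nlinarith [mul_pos hyn hyn]
  -- the nonnegative maximizer
  set v' : Fin n → ℝ := fun i => |x₀ i| with hv'
  set v₀ : E := (WithLp.equiv 2 (Fin n → ℝ)).symm v' with hv₀
  have hv₀i : ∀ i, v₀ i = |x₀ i| := fun i => rfl
  have hv₀norm : ‖v₀‖ = 1 := by
    have h1 : ‖v₀‖^2 = ‖x₀‖^2 := by
      rw [euclid_norm_sq, euclid_norm_sq]
      exact Finset.sum_congr rfl fun i _ => by rw [hv₀i, sq_abs]
    rw [hx₀norm] at h1
    nlinarith [norm_nonneg v₀]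
  have hv₀ne : v₀ ≠ 0 := by
    intro h; rw [h, norm_zero] at hv₀norm; exact one_ne_zero hv₀norm.symm
  have hv₀max : IsMaxOn T.reApplyInnerSelf (Metric.sphere (0:E) 1) v₀ := by
    intro z hz
    have h1 := hx₀max hz
    simp only [Set.mem_setOf_eq] at h1 ⊢
    have h2 : T.reApplyInnerSelf x₀ ≤ T.reApplyInnerSelf v₀ := by
      rw [hq, hq]
      exact q_abs_ge (fun i j => (hR i j).1) (fun i => x₀ i)
    exact le_trans h1 h2
  have hEV2 : T v₀ = lam • v₀ := by
    have h := hTsa.hasEigenvector_of_isMaxOn hv₀ne (by rwa [hv₀norm])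
    have := Module.End.mem_eigenspace_iff.mp h.1
    simpa using this
  have hmulVec : R.mulVec v' = lam • v' := by
    funext i
    have h1 : (T v₀) i = lam * v₀ i := by rw [hEV2]; rfl
    have h2 : (T v₀) i = ∑ j, R i j * v' j := hTx v₀ i
    have h3 : R.mulVec v' i = ∑ j, R i j * v' j := by
      simp [Matrix.mulVec, dotProduct]
    rw [h3, ← h2, h1]
    rfl
  have hvne' : v' ≠ 0 := by
    intro h
    apply hv₀ne
    rw [hv₀, h]
    rfl
  -- positivity of v'
  have hvnn : ∀ i, 0 ≤ v' i := fun i => abs_nonneg _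
  have hpowEV : ∀ k : ℕ, (R ^ k).mulVec v' = lam ^ k • v' := by
    intro k
    induction k with
    | zero => simp [Matrix.one_mulVec]
    | succ k ih =>
        rw [pow_succ', ← Matrix.mulVec_mulVec, ih, Matrix.mulVec_smul, hmulVec,
          smul_smul]
        congr 1
  have hvpos : ∀ i, 0 < v' i := by
    intro i
    rcases lt_or_eq_of_le (hvnn i) with h | h
    · exact h
    · exfalso
      obtain ⟨j, hj⟩ : ∃ j, v' j ≠ 0 := by
        by_contra hcon
        push_neg at hcon
        exact hvne' (funext hcon)
      have hjpos : 0 < v' j := lt_of_le_of_ne (hvnn j) (Ne.symm hj)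
      obtain ⟨k, hk0, hkne⟩ := hirr i j
      have hkpos : 0 < (R ^ k) i j :=
        lt_of_le_of_ne (pow_entry_nonneg (fun a b => (hR a b).1) k i j) (Ne.symm hkne)
      have hzero : (R ^ k).mulVec v' i = 0 := by
        rw [hpowEV k]
        simp [← h]
      have hposs : 0 < (R ^ k).mulVec v' i := by
        rw [Matrix.mulVec, dotProduct]
        apply Finset.sum_pos'
        · intro m _
          exact mul_nonneg (pow_entry_nonneg (fun a b => (hR a b).1) k i m) (hvnn m)
        · exact ⟨j, Finset.mem_univ j, mul_pos hkpos hjpos⟩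
      rw [hzero] at hposs
      exact lt_irrefl _ hposs
  -- spectral radius equals lam
  have hspec : lam ∈ spectrum ℝ R := mem_spectrum_iff_mulVec.mpr ⟨v', hvne', hmulVec⟩
  have hub : ∀ c ∈ spectrum ℝ R, |c| ≤ lam := by
    intro c hc
    obtain ⟨u, hu0, huv⟩ := mem_spectrum_iff_mulVec.mp hc
    obtain ⟨i₁, hi₁⟩ : ∃ i, u i ≠ 0 := by
      by_contra hcon
      push_neg at hcon
      exact hu0 (funext hcon)
    have hSum : 0 < ∑ i, u i ^ 2 := by
      apply Finset.sum_pos'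
      · intro m _; positivity
      · exact ⟨i₁, Finset.mem_univ i₁, by positivity⟩
    have hmv : ∀ i, ∑ j, R i j * u j = c * u i := by
      intro i
      have := congrFun huv i
      simpa [Matrix.mulVec, dotProduct] using this
    have key : |c| * ∑ i, u i ^ 2 ≤ ∑ i, (∑ j, R i j * |u j|) * |u i| := by
      rw [Finset.mul_sum]
      apply Finset.sum_le_sum
      intro i _
      have h1 : |c| * u i ^ 2 = |c * u i| * |u i| := by
        rw [abs_mul, mul_assoc, abs_mul_abs_self]
        ring
      rw [h1, ← hmv i]
      apply mul_le_mul_of_nonneg_right _ (abs_nonneg _)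
      calc |∑ j, R i j * u j| ≤ ∑ j, |R i j * u j| := Finset.abs_sum_le_sum_abs _ _
        _ = ∑ j, R i j * |u j| :=
            Finset.sum_congr rfl fun j _ => by rw [abs_mul, abs_of_nonneg ((hR i j).1)]
    set w : E := (WithLp.equiv 2 (Fin n → ℝ)).symm (fun i => |u i|) with hw
    have hqw : T.reApplyInnerSelf w = ∑ i, (∑ j, R i j * |u j|) * |u i| := hq w
    have hwb := hbound w
    have hwnorm : ‖w‖^2 = ∑ i, u i ^ 2 := by
      rw [euclid_norm_sq]
      exact Finset.sum_congr rfl fun i _ => by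
        show |u i| ^ 2 = u i ^ 2
        rw [sq_abs]
    rw [hqw, hwnorm] at hwb
    have : |c| * ∑ i, u i ^ 2 ≤ lam * ∑ i, u i ^ 2 := le_trans key hwb
    exact le_of_mul_le_mul_right (by linarith [this]) hSum
  refine ⟨lam, v', hlampos, hvpos, hmulVec, ?_⟩
  apply le_antisymm
  · refine csSup_le ⟨lam, lam, hspec, abs_of_pos hlampos⟩ ?_
    rintro r ⟨z, hz, rfl⟩
    exact hub z hz
  · apply le_csSup
    · refine ⟨lam, ?_⟩
      rintro r ⟨z, hz, rfl⟩
      exact hub z hz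
    · exact ⟨lam, hspec, abs_of_pos hlampos⟩

end perron

theorem endemic_global_attractor (n : ℕ) (hn : 2 ≤ n) (R : Matrix (Fin n) (Fin n) ℝ)
    (hsymm : R.IsSymm) (hR : ∀ i j, R i j ∈ Set.Icc (0:ℝ) 1)
    (hdiag : ∀ i, R i i = 0) (hirr : MatIrred R)
    (β μ : ℝ) (hβ : β ∈ Set.Ioo (0:ℝ) 1) (hμ : μ ∈ Set.Ioo (0:ℝ) 1)
    (hgt : μ / specRad R < β) :
    ∃ z₀ : Fin n → ℝ,
      (∀ i, z₀ i ∈ Set.Icc (0:ℝ) 1) ∧ z₀ ≠ 0 ∧ F R β μ z₀ = z₀ ∧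
      ∀ x : Fin n → ℝ, (∀ i, x i ∈ Set.Icc (0:ℝ) 1) → x ≠ 0 →
        Tendsto (fun k => (F R β μ)^[k] x) atTop (nhds z₀) := by
  have hirr' : ∀ i j : Fin n, ∃ k : ℕ, 0 < k ∧ (R ^ k) i j ≠ 0 := hirr
  classical
  have hn0 : 0 < n := by omega
  haveI : Nonempty (Fin n) := ⟨⟨0, hn0⟩⟩
  have hrow : ∀ i, ∃ j, 0 < R i j := row_nonzero hR hirr'
  obtain ⟨lam, v, hlam, hv, hev, hrad⟩ := perron hn R hsymm hR hdiag hirr'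
  rw [hrad] at hgt
  have hμlam : μ < β * lam := by
    rw [div_lt_iff₀ hlam] at hgt
    linarith
  set σ : ℝ := 1 - μ + β * lam with hσdef
  have hσ : 1 < σ := by rw [hσdef]; linarith [hμ.2]
  -- vmax
  set vmax : ℝ := Finset.univ.sup' Finset.univ_nonempty v with hvmaxdef
  have hvmax : ∀ i, v i ≤ vmax := fun i => Finset.le_sup' v (Finset.mem_univ i)
  have hvmaxpos : 0 < vmax := lt_of_lt_of_le (hv ⟨0, hn0⟩) (hvmax ⟨0, hn0⟩)
  set ε₀ : ℝ := min ((σ - 1) / (σ^2 * vmax)) (1 / vmax) with hε₀def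
  have hε₀pos : 0 < ε₀ := by
    apply lt_min
    · apply div_pos (by linarith) (by positivity)
    · positivity
  -- the subsolution conditions hold for every 0 < ε ≤ ε₀
  have hsubcond : ∀ ε : ℝ, 0 < ε → ε ≤ ε₀ →
      (∀ i, σ^2 * (ε * v i) ≤ σ - 1) ∧ (∀ i, ε * v i ≤ 1) := by
    intro ε hε hεle
    have h1 : ε ≤ (σ - 1) / (σ^2 * vmax) := le_trans hεle (min_le_left _ _)
    have h2 : ε ≤ 1 / vmax := le_trans hεle (min_le_right _ _)
    constructor
    · intro i
      have hvi : ε * v i ≤ ε * vmax :=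
        mul_le_mul_of_nonneg_left (hvmax i) hε.le
      have h3 : ε * (σ^2 * vmax) ≤ σ - 1 := by
        rw [← le_div_iff₀ (by positivity : (0:ℝ) < σ^2 * vmax)]
        exact h1
      nlinarith [sq_nonneg σ]
    · intro i
      have hvi : ε * v i ≤ ε * vmax := mul_le_mul_of_nonneg_left (hvmax i) hε.le
      have h3 : ε * vmax ≤ 1 := by
        rw [← le_div_iff₀ hvmaxpos]
        exact h2
      linarith
  have hsub : ∀ ε : ℝ, 0 < ε → ε ≤ ε₀ →
      (ε • v ≤ F R β μ (ε • v)) ∧ (∀ i, (ε • v) i ∈ Set.Icc (0:ℝ) 1) := by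
    intro ε hε hεle
    obtain ⟨hc1, hc2⟩ := hsubcond ε hε hεle
    refine ⟨F_subsolution hR hβ hμ hv hev hε hc1 hc2, ?_⟩
    intro i
    simp only [Pi.smul_apply, smul_eq_mul]
    exact ⟨le_of_lt (mul_pos hε (hv i)), hc2 i⟩
  -- top sequence from the all-ones vector
  have hone : ∀ i, (fun _ : Fin n => (1:ℝ)) i ∈ Set.Icc (0:ℝ) 1 := fun i => ⟨zero_le_one, le_refl _⟩
  have hdec : F R β μ (fun _ => 1) ≤ (fun _ => 1) :=
    fun i => (F_mem_box hR hβ hμ hone i).2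
  obtain ⟨z₀, hz₀box, hz₀fix, hz₀tend, hz₀le⟩ := fix_of_dec hR hβ hμ hone hdec
  -- bottom sequence from ε₀ • v
  obtain ⟨hinc, hybox⟩ := hsub ε₀ hε₀pos (le_refl _)
  obtain ⟨w, hwbox, hwfix, hwtend, hwge⟩ := fix_of_inc hR hβ hμ hybox hinc
  have hwpos : ∀ i, 0 < w i := by
    intro i
    have h1 : (ε₀ • v) i ≤ w i := hwge 0 i
    simp only [Pi.smul_apply, smul_eq_mul] at h1
    exact lt_of_lt_of_le (mul_pos hε₀pos (hv i)) h1
  -- w ≤ z₀, so z₀ is positive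
  have hwz : w ≤ z₀ := by
    intro i
    have hcomp : ∀ k, (F R β μ)^[k] (ε₀ • v) i ≤ (F R β μ)^[k] (fun _ => 1) i := by
      intro k
      exact iter_mono hR hβ hμ hybox hone (fun j => (hybox j).2) k i
    exact le_of_tendsto_of_tendsto' ((tendsto_pi_nhds.mp hwtend) i)
      ((tendsto_pi_nhds.mp hz₀tend) i) hcomp
  have hz₀pos : ∀ i, 0 < z₀ i := fun i => lt_of_lt_of_le (hwpos i) (hwz i)
  have hz₀ne : z₀ ≠ 0 := by
    intro h
    have := hz₀pos ⟨0, hn0⟩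
    rw [h] at this
    exact lt_irrefl _ this
  -- uniqueness of positive fixed points
  have huniq : ∀ p : Fin n → ℝ, (∀ i, p i ∈ Set.Icc (0:ℝ) 1) → (∀ i, 0 < p i) →
      F R β μ p = p → p = z₀ := by
    intro p hpbox hppos hpfix
    apply le_antisymm
    · exact fixed_le hR hβ hμ hrow hn0 hz₀box hpbox hz₀pos hppos hz₀fix hpfix
    · exact fixed_le hR hβ hμ hrow hn0 hpbox hz₀box hppos hz₀pos hpfix hz₀fix
  refine ⟨z₀, hz₀box, hz₀ne, hz₀fix, ?_⟩
  -- global convergence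
  intro x hxbox hx0
  obtain ⟨K, hK⟩ := iter_all_pos hR hβ hμ hirr' hxbox hx0
  set y : Fin n → ℝ := (F R β μ)^[K] x with hydef
  have hyboxK : ∀ i, y i ∈ Set.Icc (0:ℝ) 1 := iter_box hR hβ hμ hxbox K
  set ymin : ℝ := Finset.univ.inf' Finset.univ_nonempty y with hymindef
  have hymin : ∀ i, ymin ≤ y i := fun i => Finset.inf'_le y (Finset.mem_univ i)
  have hyminpos : 0 < ymin := by
    obtain ⟨i₁, -, hi₁⟩ := Finset.exists_mem_eq_inf' Finset.univ_nonempty y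
    rw [hymindef, hi₁]
    exact hK i₁
  set ε' : ℝ := min ε₀ (ymin / vmax) with hε'def
  have hε'pos : 0 < ε' := lt_min hε₀pos (div_pos hyminpos hvmaxpos)
  have hε'le : ε' ≤ ε₀ := min_le_left _ _
  have hε'v : ε' • v ≤ y := by
    intro i
    simp only [Pi.smul_apply, smul_eq_mul]
    have h1 : ε' ≤ ymin / vmax := min_le_right _ _
    have h2 : ε' * v i ≤ ε' * vmax := mul_le_mul_of_nonneg_left (hvmax i) hε'pos.le
    have h3 : ε' * vmax ≤ ymin := by
      rw [← le_div_iff₀ hvmaxpos]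
      exact h1
    exact le_trans (le_trans h2 h3) (hymin i)
  obtain ⟨hinc', hybox'⟩ := hsub ε' hε'pos hε'le
  obtain ⟨w', hw'box, hw'fix, hw'tend, hw'ge⟩ := fix_of_inc hR hβ hμ hybox' hinc'
  have hw'pos : ∀ i, 0 < w' i := by
    intro i
    have h1 : (ε' • v) i ≤ w' i := hw'ge 0 i
    simp only [Pi.smul_apply, smul_eq_mul] at h1
    exact lt_of_lt_of_le (mul_pos hε'pos (hv i)) h1
  have hw'z : w' = z₀ := huniq w' hw'box hw'pos hw'fix
  rw [hw'z] at hw'tend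
  -- sandwich for y
  have hytend : Tendsto (fun k => (F R β μ)^[k] y) atTop (nhds z₀) := by
    rw [tendsto_pi_nhds]
    intro i
    apply tendsto_of_tendsto_of_tendsto_of_le_of_le
      ((tendsto_pi_nhds.mp hw'tend) i) ((tendsto_pi_nhds.mp hz₀tend) i)
    · intro k
      exact iter_mono hR hβ hμ hybox' hyboxK hε'v k i
    · intro k
      exact iter_mono hR hβ hμ hyboxK hone (fun j => (hyboxK j).2) k i
  -- shift back
  have hshift : ∀ k, (F R β μ)^[k + K] x = (F R β μ)^[k] y := by
    intro k
    rw [hydef, ← Function.iterate_add_apply]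
  rw [← tendsto_add_atTop_iff_nat K]
  exact (Filter.tendsto_congr hshift).mpr hytend
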